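/- For every integer n ≥ 4, the number of tuples (p, (i_1,…,i_p), (j_1,…,j_p)) of integers with 1 ≤ p ≤ n-1, 1 ≤ i_1 < i_2 < ⋯ < i_p ≤ n-1, 0 ≤ j_k ≤ i_k for all k, and such that for each 1 ≤ k < p: j_k = 0 implies j_{k+1} ≥ 1; j_k = 1 implies j_{k+1} = 0 or j_{k+1} ≥ 2; and j_k > 1 implies j_k < j_{k+1}, equals ((n+1)/2)·C_n − 1 = (1/2)·binom(2n, n) − 1, where C_n is the n-th Catalan number. Equivalently, twice (this number plus 1) equals binom(2n, n). -/

import Mathlib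

namespace TLD

def ok (s : Option ℕ) (j : ℕ) : Bool :=
  match s with
  | none => true
  | some p => decide ((p = 0 → 1 ≤ j) ∧ (p = 1 → j = 0 ∨ 2 ≤ j) ∧ (1 < p → p < j))

def cnt : ℕ → ℕ → Option ℕ → ℕ
  | 0, _, _ => 1
  | t+1, a, s => cnt t (a+1) s +
      ∑ j ∈ Finset.range (a+1), if ok s j then cnt t (a+1) (some j) else 0

lemma sum_ok_none (a : ℕ) (X : ℕ → ℕ) :
    (∑ j ∈ Finset.range (a+1), if ok none j then X j else 0)
      = ∑ j ∈ Finset.Ico 0 (a+1), X j := by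
  rw [Finset.range_eq_Ico]
  exact Finset.sum_congr rfl fun j _ => by simp [ok]

lemma sum_ok_zero (a : ℕ) (X : ℕ → ℕ) :
    (∑ j ∈ Finset.range (a+1), if ok (some 0) j then X j else 0)
      = ∑ j ∈ Finset.Ico 1 (a+1), X j := by
  rw [Finset.range_eq_Ico, ← Finset.sum_Ico_consecutive _ (Nat.zero_le 1) (by omega)]
  have h0 : (∑ j ∈ Finset.Ico 0 1, if ok (some 0) j then X j else 0) = 0 := by
    simp [ok]
  rw [h0, zero_add]
  refine Finset.sum_congr rfl fun j hj => ?_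
  simp only [Finset.mem_Ico] at hj
  rw [if_pos]
  simp only [ok, decide_eq_true_eq]
  omega

lemma sum_ok_one (a : ℕ) (ha : 1 ≤ a) (X : ℕ → ℕ) :
    (∑ j ∈ Finset.range (a+1), if ok (some 1) j then X j else 0)
      = X 0 + ∑ j ∈ Finset.Ico 2 (a+1), X j := by
  rw [Finset.range_eq_Ico, Finset.sum_eq_sum_Ico_succ_bot (by omega),
    Finset.sum_eq_sum_Ico_succ_bot (by omega : 1 < a + 1)]
  have h0 : ok (some 1) 0 = true := by simp [ok]
  have h1 : ok (some 1) 1 = false := by simp [ok]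
  rw [h0, h1]
  simp only [if_true, Bool.false_eq_true, if_false, zero_add]
  congr 1
  refine Finset.sum_congr rfl fun j hj => ?_
  simp only [Finset.mem_Ico] at hj
  rw [if_pos]
  simp only [ok, decide_eq_true_eq]
  omega

lemma sum_ok_ge2 (p a : ℕ) (hp : 2 ≤ p) (X : ℕ → ℕ) :
    (∑ j ∈ Finset.range (a+1), if ok (some p) j then X j else 0)
      = ∑ j ∈ Finset.Ico (p+1) (a+1), X j := by
  rw [Finset.range_eq_Ico]
  rcases le_or_gt (p+1) (a+1) with h | h
  · rw [← Finset.sum_Ico_consecutive _ (Nat.zero_le (p+1)) h]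
    have h0 : (∑ j ∈ Finset.Ico 0 (p+1), if ok (some p) j then X j else 0) = 0 := by
      refine Finset.sum_eq_zero fun j hj => ?_
      simp only [Finset.mem_Ico] at hj
      rw [if_neg]
      simp only [ok, decide_eq_true_eq]
      push_neg
      omega
    rw [h0, zero_add]
    refine Finset.sum_congr rfl fun j hj => ?_
    simp only [Finset.mem_Ico] at hj
    rw [if_pos]
    simp only [ok, decide_eq_true_eq]
    omega
  · rw [show Finset.Ico (p+1) (a+1) = ∅ from Finset.Ico_eq_empty (by omega), Finset.sum_empty]
    refine Finset.sum_eq_zero fun j hj => ?_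
    simp only [Finset.mem_Ico] at hj
    rw [if_neg]
    simp only [ok, decide_eq_true_eq]
    push_neg
    omega


-- L2 : states 0 and 1 give equal counts
lemma cnt_zero_eq_one : ∀ t a, 1 ≤ a → cnt t a (some 0) = cnt t a (some 1) := by
  intro t
  induction t with
  | zero => intro a _; rfl
  | succ t ih =>
    intro a ha
    show cnt t (a+1) (some 0) + _ = cnt t (a+1) (some 1) + _
    rw [sum_ok_zero, sum_ok_one a ha]
    rw [Finset.sum_eq_sum_Ico_succ_bot (by omega : 1 < a + 1)]
    have h01 := ih (a+1) (by omega)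
    simp only [show (1:ℕ)+1 = 2 from rfl]
    omega

-- L1
lemma cnt_none_rec (t a : ℕ) :
    cnt (t+1) a none = cnt t (a+1) none + cnt (t+1) a (some 0) := by
  show cnt t (a+1) none + _ = cnt t (a+1) none + (cnt t (a+1) (some 0) + _)
  rw [sum_ok_none, sum_ok_zero,
    Finset.sum_eq_sum_Ico_succ_bot (by omega : 0 < a + 1)]

-- L3
lemma cnt_one_rec (t a : ℕ) (ha : 2 ≤ a) :
    cnt (t+1) a (some 1)
      = cnt t (a+1) (some 1) + cnt t (a+1) (some 0) + cnt (t+1) a (some 2) := by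
  show cnt t (a+1) (some 1) + _ = _ + (cnt t (a+1) (some 2) + _)
  rw [sum_ok_one a (by omega), sum_ok_ge2 2 a (by omega),
    Finset.sum_eq_sum_Ico_succ_bot (by omega : 2 < a + 1)]
  omega

-- L4
lemma cnt_ge2_rec (t a j : ℕ) (hj : 2 ≤ j) (hja : j < a) :
    cnt (t+1) a (some j) = cnt (t+1) a (some (j+1)) + cnt t (a+1) (some j) := by
  show cnt t (a+1) (some j) + _ = (cnt t (a+1) (some (j+1)) + _) + cnt t (a+1) (some j)
  rw [sum_ok_ge2 j a hj, sum_ok_ge2 (j+1) a (by omega),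
    Finset.sum_eq_sum_Ico_succ_bot (by omega : j + 1 < a + 1)]
  omega

-- L5
lemma cnt_ge2_stop (t a j : ℕ) (hj : 2 ≤ j) (hja : a ≤ j) :
    cnt (t+1) a (some j) = cnt t (a+1) (some j) := by
  show cnt t (a+1) (some j) + _ = cnt t (a+1) (some j)
  rw [sum_ok_ge2 j a hj,
    show Finset.Ico (j+1) (a+1) = ∅ from Finset.Ico_eq_empty (by omega), Finset.sum_empty]
  omega


lemma CF_D : ∀ t d j, 2 ≤ j →
    cnt t (j+d) (some j) + (2*t+d-1).choose (t+d+1) = (2*t+d-1).choose t := by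
  intro t
  induction t with
  | zero =>
    intro d j hj
    show 1 + (2*0+d-1).choose (0+d+1) = (2*0+d-1).choose 0
    rw [Nat.choose_eq_zero_of_lt (by omega), Nat.choose_zero_right]
  | succ t ih =>
    intro d
    induction d with
    | zero =>
      intro j hj
      rw [show j + 0 = j from rfl, cnt_ge2_stop t j j hj le_rfl]
      have h1 := ih 1 j hj
      rw [show 2*t+1-1 = 2*t from by omega] at h1
      have p1 := Nat.choose_succ_succ' (2*t) t
      have p2 := Nat.choose_succ_succ' (2*t) (t+1)
      rw [show 2*(t+1)+0-1 = 2*t+1 from by omega, show t+1+0+1 = t+1+1 from by omega]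
      omega
    | succ d ihd =>
      intro j hj
      rw [cnt_ge2_rec t (j+(d+1)) j hj (by omega)]
      have h1 := ihd (j+1) (by omega)
      rw [show j+1+d = j+(d+1) from by omega, show 2*(t+1)+d-1 = 2*t+d+1 from by omega,
        show t+1+d+1 = t+d+2 from by omega] at h1
      have h2 := ih (d+2) j hj
      rw [show 2*t+(d+2)-1 = 2*t+d+1 from by omega, show j+(d+2) = j+(d+1)+1 from by omega,
        show t+(d+2)+1 = t+d+2+1 from by omega] at h2
      rw [show 2*(t+1)+(d+1)-1 = 2*t+d+1+1 from by omega,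
        show t+1+(d+1)+1 = t+d+2+1 from by omega]
      have p1 := Nat.choose_succ_succ' (2*t+d+1) t
      have p2 := Nat.choose_succ_succ' (2*t+d+1) (t+d+2)
      omega

lemma CF_01 : ∀ t a, 1 ≤ a → cnt t a (some 1) = (a+2*t-1).choose t := by
  intro t
  induction t with
  | zero => intro a _; rw [Nat.choose_zero_right]; rfl
  | succ t ih =>
    intro a ha
    rcases eq_or_lt_of_le ha with h1a | h2a
    · -- a = 1
      subst h1a
      show cnt t 2 (some 1) + _ = _
      rw [sum_ok_one 1 le_rfl, Finset.Ico_self, Finset.sum_empty]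
      have h1 := ih 2 (by omega)
      rw [show 2+2*t-1 = 2*t+1 from by omega] at h1
      have h0 := cnt_zero_eq_one t 2 (by omega)
      have p1 := Nat.choose_succ_succ' (2*t+1) t
      have s1 := Nat.choose_symm (show t+1 ≤ 2*t+1 from by omega)
      rw [show 2*t+1-(t+1) = t from by omega] at s1
      rw [show 1+2*(t+1)-1 = 2*t+1+1 from by omega]
      simp only [show (1:ℕ)+1 = 2 from rfl]
      omega
    · -- 2 ≤ a
      rw [cnt_one_rec t a h2a]
      have h1 := ih (a+1) (by omega)
      rw [show a+1+2*t-1 = a+2*t from by omega] at h1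
      have h0 := cnt_zero_eq_one t (a+1) (by omega)
      have h2 := CF_D (t+1) (a-2) 2 le_rfl
      rw [show 2+(a-2) = a from by omega, show 2*(t+1)+(a-2)-1 = a+2*t-1 from by omega,
        show t+1+(a-2)+1 = a+t from by omega] at h2
      have p1 := Nat.choose_succ_succ' (a+2*t) t
      have p2 := Nat.choose_succ_succ' (a+2*t-1) t
      rw [show a+2*t-1+1 = a+2*t from by omega] at p2
      have s1 := Nat.choose_symm (show t ≤ a+2*t from by omega)
      rw [show a+2*t-t = a+t from by omega] at s1
      have p3 := Nat.choose_succ_succ' (a+2*t-1) (a+t-1)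
      rw [show a+2*t-1+1 = a+2*t from by omega, show a+t-1+1 = a+t from by omega] at p3
      have s2 := Nat.choose_symm (show a+t-1 ≤ a+2*t-1 from by omega)
      rw [show a+2*t-1-(a+t-1) = t from by omega] at s2
      rw [show a+2*(t+1)-1 = a+2*t+1 from by omega]
      omega

lemma CF_none : ∀ t a, 1 ≤ a → cnt t a none = (a+2*t).choose t := by
  intro t
  induction t with
  | zero => intro a _; rw [Nat.choose_zero_right]; rfl
  | succ t ih =>
    intro a ha
    rw [cnt_none_rec t a]
    have h1 := ih (a+1) (by omega)
    rw [show a+1+2*t = a+2*t+1 from by omega] at h1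
    have h2 := cnt_zero_eq_one (t+1) a ha
    have h3 := CF_01 (t+1) a ha
    rw [show a+2*(t+1)-1 = a+2*t+1 from by omega] at h3
    have p1 := Nat.choose_succ_succ' (a+2*t+1) t
    rw [show a+2*(t+1) = a+2*t+1+1 from by omega]
    omega


def J : ℕ × ℕ → ℕ × ℕ → Prop := fun p q =>
  (p.2 = 0 → 1 ≤ q.2) ∧ (p.2 = 1 → q.2 = 0 ∨ 2 ≤ q.2) ∧ (1 < p.2 → p.2 < q.2)

def lt1 : ℕ × ℕ → ℕ × ℕ → Prop := fun p q => p.1 < q.1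

def allF : ℕ → ℕ → Option ℕ → Finset (List (ℕ × ℕ))
  | 0, _, _ => {[]}
  | t+1, a, s => allF t (a+1) s ∪ (Finset.range (a+1)).biUnion
      (fun j => if ok s j then (allF t (a+1) (some j)).image (fun l => (a, j) :: l) else ∅)

lemma ok_iff_J (j : ℕ) (q : ℕ × ℕ) (i : ℕ) : ok (some j) q.2 = true ↔ J (i, j) q := by
  simp only [ok, decide_eq_true_eq, J]

lemma mem_allF : ∀ t a s l, l ∈ allF t a s ↔
    (l.Chain' lt1 ∧ l.Chain' J ∧ (∀ p ∈ l, a ≤ p.1 ∧ p.2 ≤ p.1 ∧ p.1 < a + t) ∧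
      ∀ p ∈ l.head?, ok s p.2 = true) := by
  intro t
  induction t with
  | zero =>
    intro a s l
    show l ∈ ({[]} : Finset _) ↔ _
    rw [Finset.mem_singleton]
    constructor
    · rintro rfl
      refine ⟨List.isChain_nil, List.isChain_nil, by simp, by simp⟩
    · rintro ⟨-, -, h3, -⟩
      cases l with
      | nil => rfl
      | cons p tl => exact absurd (h3 p (List.mem_cons_self)) (by omega)
  | succ t ih =>
    intro a s l
    have htrans : Transitive lt1 := fun x y z h1 h2 => lt_trans h1 h2
    haveI : IsTrans (ℕ × ℕ) lt1 := ⟨htrans⟩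
    show l ∈ _ ∪ _ ↔ _
    rw [Finset.mem_union, Finset.mem_biUnion]
    constructor
    · rintro (h | ⟨j, hj, hmem⟩)
      · rw [ih] at h
        obtain ⟨h1, h2, h3, h4⟩ := h
        exact ⟨h1, h2, fun p hp => by have := h3 p hp; omega, h4⟩
      · rw [Finset.mem_range] at hj
        rcases hok : ok s j with _ | _
        · rw [hok] at hmem; simp at hmem
        · rw [hok, if_pos rfl, Finset.mem_image] at hmem
          obtain ⟨tl, htl, rfl⟩ := hmem
          rw [ih] at htl
          obtain ⟨h1, h2, h3, h4⟩ := htl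
          refine ⟨List.isChain_cons.mpr ⟨?_, h1⟩, List.isChain_cons.mpr ⟨?_, h2⟩, ?_, ?_⟩
          · intro y hy
            have := h3 y (List.mem_of_mem_head? hy)
            show a < y.1
            omega
          · intro y hy
            exact (ok_iff_J j y a).mp (h4 y hy)
          · intro p hp
            rcases List.mem_cons.mp hp with rfl | hp'
            · exact ⟨le_rfl, by omega, by omega⟩
            · have := h3 p hp'
              omega
          · intro p hp
            simp only [List.head?_cons, Option.mem_some_iff] at hp
            rw [← hp]
            exact hok
    · rintro ⟨h1, h2, h3, h4⟩
      cases l with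
      | nil =>
        left
        rw [ih]
        exact ⟨List.isChain_nil, List.isChain_nil, by simp, by simp⟩
      | cons p tl =>
        have hp := h3 p (List.mem_cons_self)
        have hpw : (p :: tl).Pairwise lt1 := List.isChain_iff_pairwise.mp h1
        have htlb : ∀ q ∈ tl, p.1 < q.1 := fun q hq => (List.pairwise_cons.mp hpw).1 q hq
        rcases eq_or_lt_of_le hp.1 with heq | hlt
        · -- p.1 = a : goes into the biUnion part
          right
          refine ⟨p.2, Finset.mem_range.mpr (by omega), ?_⟩
          have hok : ok s p.2 = true := h4 p (by simp)
          rw [hok, if_pos rfl, Finset.mem_image]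
          refine ⟨tl, ?_, ?_⟩
          · rw [ih]
            refine ⟨(List.isChain_cons.mp h1).2, (List.isChain_cons.mp h2).2, ?_, ?_⟩
            · intro q hq
              have := h3 q (List.mem_cons_of_mem p hq)
              have := htlb q hq
              omega
            · intro q hq
              have hJ := (List.isChain_cons.mp h2).1 q hq
              exact (ok_iff_J p.2 q p.1).mpr hJ
          · rw [heq]
        · -- a < p.1 : goes into the left part
          left
          rw [ih]
          refine ⟨h1, h2, ?_, h4⟩
          intro q hq0
          rcases List.mem_cons.mp hq0 with rfl | hq
          · have := h3 q (List.mem_cons_self)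
            omega
          · have := h3 q (List.mem_cons_of_mem p hq)
            have := htlb q hq
            omega


lemma card_allF : ∀ t a s, (allF t a s).card = cnt t a s := by
  intro t
  induction t with
  | zero => intro a s; rfl
  | succ t ih =>
    intro a s
    show (allF t (a+1) s ∪ (Finset.range (a+1)).biUnion
        (fun j => if ok s j then (allF t (a+1) (some j)).image (fun l => (a, j) :: l) else ∅)).card
      = cnt t (a+1) s + ∑ j ∈ Finset.range (a+1), if ok s j then cnt t (a+1) (some j) else 0
    rw [Finset.card_union_of_disjoint, Finset.card_biUnion]
    · congr 1
      · exact ih (a+1) s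
      refine Finset.sum_congr rfl fun j _ => ?_
      rcases hok : ok s j with _ | _
      · simp
      · rw [if_pos rfl, if_pos rfl, Finset.card_image_of_injective _ (List.cons_injective), ih]
    · -- pairwise disjoint images
      intro x _ y _ hxy
      rw [Function.onFun, Finset.disjoint_left]
      intro l hlx hly
      rcases hokx : ok s x with _ | _
      · rw [hokx] at hlx; simp at hlx
      rcases hoky : ok s y with _ | _
      · rw [hoky] at hly; simp at hly
      rw [hokx, if_pos rfl, Finset.mem_image] at hlx
      rw [hoky, if_pos rfl, Finset.mem_image] at hly
      obtain ⟨tlx, _, hx⟩ := hlx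
      obtain ⟨tly, _, hy⟩ := hly
      rw [← hy] at hx
      have : (a, x) = (a, y) := (List.cons.inj hx).1
      exact hxy (congrArg Prod.snd this)
    · -- disjointness of the two parts
      rw [Finset.disjoint_left]
      intro l hl hl2
      rw [mem_allF] at hl
      rw [Finset.mem_biUnion] at hl2
      obtain ⟨j, _, hmem⟩ := hl2
      rcases hok : ok s j with _ | _
      · rw [hok] at hmem; simp at hmem
      · rw [hok, if_pos rfl, Finset.mem_image] at hmem
        obtain ⟨tl, _, rfl⟩ := hmem
        have h5 := hl.2.2.1 (a, j) (List.mem_cons_self)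
        omega


lemma length_le (l : List (ℕ × ℕ)) (m : ℕ) (hc : l.Chain' lt1)
    (hb : ∀ p ∈ l, 1 ≤ p.1 ∧ p.1 ≤ m) : l.length ≤ m := by
  haveI : IsTrans (ℕ × ℕ) lt1 := ⟨fun x y z h1 h2 => lt_trans h1 h2⟩
  have hpw : l.Pairwise lt1 := List.isChain_iff_pairwise.mp hc
  have hfst : (l.map Prod.fst).Pairwise (· < ·) := by
    rw [List.pairwise_map]; exact hpw
  have hnd : (l.map Prod.fst).Nodup := hfst.imp ne_of_lt
  have hsub : (l.map Prod.fst).toFinset ⊆ Finset.Icc 1 m := by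
    intro x hx
    rw [List.mem_toFinset, List.mem_map] at hx
    obtain ⟨p, hp, rfl⟩ := hx
    exact Finset.mem_Icc.mpr ⟨(hb p hp).1, (hb p hp).2⟩
  calc l.length = (l.map Prod.fst).length := (List.length_map _).symm
    _ = (l.map Prod.fst).toFinset.card := (List.toFinset_card_of_nodup hnd).symm
    _ ≤ (Finset.Icc 1 m).card := Finset.card_le_card hsub
    _ = m := by rw [Nat.card_Icc]; omega

end TLD



/-- The number of tuples `(p, (i₁,…,i_p), (j₁,…,j_p))`, encoded as nonempty lists
`[(i₁,j₁), …, (i_p,j_p)]`, with `1 ≤ p ≤ n-1`, `1 ≤ i₁ < ⋯ < i_p ≤ n-1`,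
`0 ≤ j_k ≤ i_k` for all `k`, and for `k < p`: `j_k = 0 → j_{k+1} ≥ 1`,
`j_k = 1 → (j_{k+1} = 0 ∨ j_{k+1} ≥ 2)`, `j_k > 1 → j_k < j_{k+1}`, equals
`((n+1)/2) * C_n - 1 = (1/2) * choose (2n) n - 1`; equivalently, twice (this number
plus 1) equals `choose (2n) n`. -/
theorem count_typeD_M0 (n : ℕ) (hn : 4 ≤ n) :
    2 * (({l : List (ℕ × ℕ) | l ≠ [] ∧ l.length ≤ n - 1 ∧
        l.Chain' (fun p q => p.1 < q.1) ∧
        l.Chain' (fun p q =>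
          (p.2 = 0 → 1 ≤ q.2) ∧ (p.2 = 1 → q.2 = 0 ∨ 2 ≤ q.2) ∧ (1 < p.2 → p.2 < q.2)) ∧
        ∀ p ∈ l, 1 ≤ p.1 ∧ p.2 ≤ p.1 ∧ p.1 ≤ n - 1}).ncard + 1) = (2 * n).choose n := by
  classical
  set F : Finset (List (ℕ × ℕ)) := TLD.allF (n-1) 1 none with hF
  have key : {l : List (ℕ × ℕ) | l ≠ [] ∧ l.length ≤ n - 1 ∧
        l.Chain' (fun p q => p.1 < q.1) ∧
        l.Chain' (fun p q =>
          (p.2 = 0 → 1 ≤ q.2) ∧ (p.2 = 1 → q.2 = 0 ∨ 2 ≤ q.2) ∧ (1 < p.2 → p.2 < q.2)) ∧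
        ∀ p ∈ l, 1 ≤ p.1 ∧ p.2 ≤ p.1 ∧ p.1 ≤ n - 1}
      = (↑F : Set (List (ℕ × ℕ))) \ {[]} := by
    ext l
    simp only [Set.mem_setOf_eq, Set.mem_diff, Set.mem_singleton_iff, Finset.mem_coe, hF]
    rw [TLD.mem_allF]
    constructor
    · rintro ⟨hne, hlen, hc1, hc2, hb⟩
      refine ⟨⟨hc1, hc2, fun p hp => ?_, fun p _ => rfl⟩, hne⟩
      have := hb p hp
      exact ⟨this.1, this.2.1, by omega⟩
    · rintro ⟨⟨hc1, hc2, hb, -⟩, hne⟩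
      refine ⟨hne, ?_, hc1, hc2, fun p hp => ?_⟩
      · exact TLD.length_le l (n-1) hc1 fun p hp => ⟨(hb p hp).1, by have := hb p hp; omega⟩
      · have := hb p hp
        exact ⟨this.1, this.2.1, by omega⟩
  rw [key]
  have hnil : ([] : List (ℕ × ℕ)) ∈ F := by
    rw [hF, TLD.mem_allF]
    exact ⟨List.isChain_nil, List.isChain_nil, by simp, by simp⟩
  have hfin : ((↑F : Set (List (ℕ × ℕ))) \ {[]}).Finite := F.finite_toSet.diff
  have hins : insert ([] : List (ℕ × ℕ)) ((↑F : Set (List (ℕ × ℕ))) \ {[]})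
      = (↑F : Set (List (ℕ × ℕ))) := by
    rw [Set.insert_diff_singleton]
    exact Set.insert_eq_of_mem hnil
  have hcard1 := Set.ncard_insert_of_notMem
    (show ([] : List (ℕ × ℕ)) ∉ (↑F : Set (List (ℕ × ℕ))) \ {[]} by simp) hfin
  rw [hins] at hcard1
  rw [← hcard1, Set.ncard_coe_finset, hF, TLD.card_allF, TLD.CF_none (n-1) 1 le_rfl]
  rw [show 1+2*(n-1) = 2*n-1 from by omega]
  have p1 := Nat.choose_succ_succ' (2*n-1) (n-1)
  have s1 := Nat.choose_symm (show n-1+1 ≤ 2*n-1 from by omega)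
  rw [show 2*n-1-(n-1+1) = n-1 from by omega] at s1
  rw [show n-1+1 = n from by omega] at s1
  rw [show 2*n-1+1 = 2*n from by omega, show n-1+1 = n from by omega] at p1
  omega
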